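/- arXiv:0910.4797 — 5 statements merged into one kernel-verified Lean document; each statement's English description precedes it below -/
import Mathlib

section
/- Let T be a nondegenerate tile (a finite hereditary subset of ℕ² with at least 2 elements) with coordinatewise supremum (c₁, c₂), and let n ∈ ℕ². Then the translate T + n + e₁ - e₂ (when it lies in ℕ²) satisfies: (T \ {c₁e₁}) + n + e₁ - e₂ ⊆ (T + n + e₁) ∪ (T + n - e₂), i.e., every point of the translated tile except the corner c₁e₁ + n + e₁ - e₂ lies in the union of the two adjacent translates. -/
/-- For a nondegenerate tile `T` with coordinatewise supremum `(c₁, c₂)` and `n ∈ ℕ²`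
with `n₂ ≥ 1`, every point of the translate `(T \ {c₁e₁}) + n + e₁ - e₂` lies in
`(T + n + e₁) ∪ (T + n - e₂)`. -/
theorem stmt_4 (T : Set (ℕ × ℕ)) (c1 c2 : ℕ) (hfin : T.Finite)
    (hher : ∀ n ∈ T, ∀ m : ℕ × ℕ, m ≤ n → m ∈ T)
    (hcard : 2 ≤ T.ncard)
    (hub : ∀ j ∈ T, j.1 ≤ c1 ∧ j.2 ≤ c2)
    (hmem1 : ((c1 : ℕ), (0 : ℕ)) ∈ T) (hmem2 : ((0 : ℕ), (c2 : ℕ)) ∈ T)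
    (n : ℕ × ℕ) (hn : 1 ≤ n.2) :
    ∀ i ∈ T, i ≠ (c1, 0) →
      (i.1 + n.1 + 1, i.2 + n.2 - 1) ∈
        ((fun t : ℕ × ℕ => (t.1 + n.1 + 1, t.2 + n.2)) '' T ∪
         (fun t : ℕ × ℕ => (t.1 + n.1, t.2 + n.2 - 1)) '' T) := by
  intro i hi hne
  rcases Nat.eq_zero_or_pos i.2 with h2 | h2
  · -- i.2 = 0, use second map with t = (i.1+1, 0)
    right
    have hlt : i.1 < c1 := by
      rcases lt_or_eq_of_le (hub i hi).1 with h | h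
      · exact h
      · exact absurd (Prod.ext h h2) hne
    refine ⟨(i.1 + 1, 0), hher _ hmem1 _ ⟨hlt, le_refl 0⟩, ?_⟩
    simp [h2]; omega
  · -- i.2 ≥ 1, use first map with t = (i.1, i.2 - 1)
    left
    refine ⟨(i.1, i.2 - 1), hher _ hi _ ⟨le_refl _, Nat.sub_le _ _⟩, ?_⟩
    have : i.2 - 1 + n.2 = i.2 + n.2 - 1 := by omega
    simp [this]
end

section
/- Let v : T → A belong to the vertex set Λ⁰ = {F_{p,a}}. Then the number of vertices u ∈ Λ⁰ such that v(m) = u(m - e₁) for every m ∈ T ∩ (T + e₁) is exactly |A|^{c₂}. -/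
/-- The vertex `F_{p,a} : T → A` associated to basic data, defined by `F_{p,a}(c₂e₂) = a`,
`F_{p,a}(c₁e₁) = f_p(a)` and `F_{p,a}|_P = p`, where `P = T \ {c₁e₁, c₂e₂}`. -/
def Fgen (c1 c2 : ℕ) (T : Finset (ℕ × ℕ)) {A : Type}
    (f : (↥((T.erase (c1, 0)).erase ((0 : ℕ), c2)) → A) → A → A)
    (p : ↥((T.erase (c1, 0)).erase ((0 : ℕ), c2)) → A) (a : A) :
    ↥T → A :=
  fun t =>
    if h0 : t.val = ((0 : ℕ), c2) then a
    else if h1 : t.val = (c1, 0) then f p a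
    else p ⟨t.val, Finset.mem_erase.mpr ⟨h0, Finset.mem_erase.mpr ⟨h1, t.2⟩⟩⟩

/-- If `v : T → A` is a vertex of the 2-graph associated to basic data, the number of
vertices `u` with `v(m) = u(m - e₁)` for every `m ∈ T ∩ (T + e₁)` (i.e. receiving a blue
edge from `v`) is exactly `|A|^{c₂}`. -/
theorem stmt_7 (c1 c2 : ℕ) (T : Finset (ℕ × ℕ)) (A : Type) [Fintype A] [Nonempty A]
    (hher : ∀ n ∈ T, ∀ m : ℕ × ℕ, m ≤ n → m ∈ T)
    (hub : ∀ j ∈ T, j.1 ≤ c1 ∧ j.2 ≤ c2)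
    (hmem1 : ((c1 : ℕ), (0 : ℕ)) ∈ T) (hmem2 : ((0 : ℕ), (c2 : ℕ)) ∈ T)
    (hnd : 2 ≤ T.card)
    (f : (↥((T.erase (c1, 0)).erase ((0 : ℕ), c2)) → A) → A → A)
    (hf : ∀ p, Function.Bijective (f p))
    (v : ↥T → A) (hv : ∃ p a, v = Fgen c1 c2 T f p a) :
    Set.ncard {u : ↥T → A |
        (∃ p a, u = Fgen c1 c2 T f p a) ∧
        ∀ (m : ℕ × ℕ) (hm : m ∈ T), 1 ≤ m.1 → ∀ hm' : (m.1 - 1, m.2) ∈ T,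
          v ⟨m, hm⟩ = u ⟨(m.1 - 1, m.2), hm'⟩} =
      Fintype.card A ^ c2 := by
  classical
  have hA : Inhabited A := Classical.inhabited_of_nonempty ‹_›
  -- c1 and c2 are not both zero
  have hc12 : ¬(c1 = 0 ∧ c2 = 0) := by
    rintro ⟨rfl, rfl⟩
    have hsub : T ⊆ {((0 : ℕ), (0 : ℕ))} := by
      intro j hj
      have h := hub j hj
      simp only [Finset.mem_singleton]
      exact Prod.ext (Nat.le_zero.mp h.1) (Nat.le_zero.mp h.2)
    have := Finset.card_le_card hsub
    simp only [Finset.card_singleton] at this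
    omega
  have hne : ((0 : ℕ), c2) ≠ ((c1 : ℕ), (0 : ℕ)) := by
    intro h
    rw [Prod.mk.injEq] at h
    exact hc12 ⟨h.1.symm, h.2⟩
  -- the right boundary R
  set R : Finset (ℕ × ℕ) := T.filter (fun n => (n.1 + 1, n.2) ∉ T) with hRdef
  have hmemR : ∀ n, n ∈ R ↔ n ∈ T ∧ (n.1 + 1, n.2) ∉ T := by
    intro n; simp [hRdef]
  have hc10R : ((c1 : ℕ), (0 : ℕ)) ∈ R := by
    rw [hmemR]
    refine ⟨hmem1, fun h => ?_⟩
    have := (hub _ h).1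
    simp only at this
    omega
  have hrow0 : ∀ j ≤ c2, ((0 : ℕ), j) ∈ T := fun j hj =>
    hher _ hmem2 (0, j) (by simp [Prod.le_def, hj])
  have hRcard : R.card = c2 + 1 := by
    have hb := Finset.card_bij (t := Finset.range (c2 + 1))
        (fun (n : ℕ × ℕ) (_ : n ∈ R) => n.2)
        (fun a ha => by
          have := (hub a ((hmemR a).mp ha).1).2
          simp only [Finset.mem_range]; omega)
        (fun a ha b hb h => by
          have h' : a.2 = b.2 := h
          rcases lt_trichotomy a.1 b.1 with hlt | heq | hlt
          · exact absurd (hher b ((hmemR b).mp hb).1 (a.1 + 1, a.2)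
              (by simp only [Prod.le_def]; omega)) ((hmemR a).mp ha).2
          · exact Prod.ext heq h'
          · exact absurd (hher a ((hmemR a).mp ha).1 (b.1 + 1, b.2)
              (by simp only [Prod.le_def]; omega)) ((hmemR b).mp hb).2)
        (fun j hj => by
          simp only [Finset.mem_range] at hj
          set r : ℕ := Nat.findGreatest (fun i => (i, j) ∈ T) c1 with hr
          have hrT : (r, j) ∈ T :=
            Nat.findGreatest_spec (P := fun i => (i, j) ∈ T)
              (Nat.zero_le c1) (hrow0 j (by omega))
          have hrT' : (r + 1, j) ∉ T := by
            intro h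
            exact Nat.findGreatest_is_greatest (P := fun i => (i, j) ∈ T)
              (lt_add_one r) ((hub _ h).1) h
          exact ⟨(r, j), (hmemR _).mpr ⟨hrT, hrT'⟩, rfl⟩)
    rw [hb, Finset.card_range]
  set Q : Finset (ℕ × ℕ) := R.erase ((c1 : ℕ), (0 : ℕ)) with hQdef
  have hQT : ∀ q ∈ Q, q ∈ T := fun q hq =>
    ((hmemR q).mp (Finset.mem_of_mem_erase hq)).1
  have hQcard : Q.card = c2 := by
    rw [hQdef, Finset.card_erase_of_mem hc10R, hRcard]
    omega
  -- the set in question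
  set E : Set (↥T → A) := {u : ↥T → A |
      (∃ p a, u = Fgen c1 c2 T f p a) ∧
      ∀ (m : ℕ × ℕ) (hm : m ∈ T), 1 ≤ m.1 → ∀ hm' : (m.1 - 1, m.2) ∈ T,
        v ⟨m, hm⟩ = u ⟨(m.1 - 1, m.2), hm'⟩} with hEdef
  -- values at non-boundary points are determined by v
  have hS : ∀ u ∈ E, ∀ n (hn : n ∈ T) (h : (n.1 + 1, n.2) ∈ T),
      u ⟨n, hn⟩ = v ⟨(n.1 + 1, n.2), h⟩ := by
    intro u hu n hn h
    have := hu.2 (n.1 + 1, n.2) h (by omega) (by simpa using hn)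
    rw [this]
    congr 1
  -- characterization of being an Fgen vertex
  have hF : ∀ u : ↥T → A, (∃ p a, u = Fgen c1 c2 T f p a) ↔
      u ⟨(c1, 0), hmem1⟩ =
        f (fun x => u ⟨x.val, Finset.mem_of_mem_erase (Finset.mem_of_mem_erase x.2)⟩)
          (u ⟨((0 : ℕ), c2), hmem2⟩) := by
    intro u
    constructor
    · rintro ⟨p, a, rfl⟩
      have h1 : Fgen c1 c2 T f p a ⟨(c1, 0), hmem1⟩ = f p a := by
        simp only [Fgen]
        simp only [Prod.mk.injEq]
        split_ifs with h0
        · exact absurd ⟨h0.1, h0.2.symm⟩ hc12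
        · rfl
      have h2 : Fgen c1 c2 T f p a ⟨((0 : ℕ), c2), hmem2⟩ = a := by
        simp only [Fgen]
        simp
      have h3 : (fun x : ↥((T.erase (c1, 0)).erase ((0 : ℕ), c2)) =>
          Fgen c1 c2 T f p a
            ⟨x.val, Finset.mem_of_mem_erase (Finset.mem_of_mem_erase x.2)⟩) = p := by
        funext x
        have hx1 : x.val ≠ ((0 : ℕ), c2) := (Finset.mem_erase.mp x.2).1
        have hx2 : x.val ≠ ((c1 : ℕ), (0 : ℕ)) :=
          (Finset.mem_erase.mp (Finset.mem_of_mem_erase x.2)).1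
        simp only [Fgen]
        rw [dif_neg hx1, dif_neg hx2]
      rw [h1, h2, h3]
    · intro h
      refine ⟨fun x => u ⟨x.val, Finset.mem_of_mem_erase (Finset.mem_of_mem_erase x.2)⟩,
        u ⟨((0 : ℕ), c2), hmem2⟩, ?_⟩
      funext t
      simp only [Fgen]
      split_ifs with h0 h1
      · congr 1
        exact Subtype.ext h0
      · rw [← h]
        congr 1
        exact Subtype.ext h1
      · rfl
  -- two elements of E agreeing on Q are equal
  have hext : ∀ u1 ∈ E, ∀ u2 ∈ E,
      (∀ q (hq : q ∈ Q), u1 ⟨q, hQT q hq⟩ = u2 ⟨q, hQT q hq⟩) → u1 = u2 := by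
    intro u1 hu1 u2 hu2 hg
    have hrest : ∀ t : ↥T, t.val ≠ ((c1 : ℕ), (0 : ℕ)) → u1 t = u2 t := by
      intro t ht
      by_cases h : (t.val.1 + 1, t.val.2) ∈ T
      · rw [hS u1 hu1 t.val t.2 h, hS u2 hu2 t.val t.2 h]
      · have hq : t.val ∈ Q :=
          Finset.mem_erase.mpr ⟨ht, (hmemR _).mpr ⟨t.2, h⟩⟩
        have := hg t.val hq
        simpa using this
    funext t
    by_cases ht : t.val = ((c1 : ℕ), (0 : ℕ))
    · have e1 := (hF u1).mp hu1.1
      have e2 := (hF u2).mp hu2.1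
      have hpe : (fun x : ↥((T.erase (c1, 0)).erase ((0 : ℕ), c2)) =>
          u1 ⟨x.val, Finset.mem_of_mem_erase (Finset.mem_of_mem_erase x.2)⟩) =
          (fun x => u2 ⟨x.val, Finset.mem_of_mem_erase (Finset.mem_of_mem_erase x.2)⟩) := by
        funext x
        exact hrest _ (Finset.mem_erase.mp (Finset.mem_of_mem_erase x.2)).1
      have hae : u1 ⟨((0 : ℕ), c2), hmem2⟩ = u2 ⟨((0 : ℕ), c2), hmem2⟩ :=
        hrest _ hne
      have : u1 ⟨(c1, 0), hmem1⟩ = u2 ⟨(c1, 0), hmem1⟩ := by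
        rw [e1, e2, hpe, hae]
      have heq : t = ⟨((c1 : ℕ), (0 : ℕ)), hmem1⟩ := Subtype.ext ht
      rw [heq]
      exact this
    · exact hrest t ht
  -- every assignment on Q extends to an element of E
  have hsurj : ∀ g : ↥Q → A, ∃ u ∈ E, ∀ q (hq : q ∈ Q),
      u ⟨q, hQT q hq⟩ = g ⟨q, hq⟩ := by
    intro g
    set w : ↥T → A := fun t =>
      if h : (t.val.1 + 1, t.val.2) ∈ T then v ⟨(t.val.1 + 1, t.val.2), h⟩
      else if h2 : t.val ∈ Q then g ⟨t.val, h2⟩ else default with hwdef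
    set u : ↥T → A := fun t =>
      if t.val = ((c1 : ℕ), (0 : ℕ)) then
        f (fun x => w ⟨x.val, Finset.mem_of_mem_erase (Finset.mem_of_mem_erase x.2)⟩)
          (w ⟨((0 : ℕ), c2), hmem2⟩)
      else w t with hudef
    have huw : ∀ t : ↥T, t.val ≠ ((c1 : ℕ), (0 : ℕ)) → u t = w t := by
      intro t ht
      simp only [hudef, if_neg ht]
    have hu1 : ∃ p a, u = Fgen c1 c2 T f p a := by
      rw [hF]
      have h1 : u ⟨(c1, 0), hmem1⟩ =
          f (fun x => w ⟨x.val, Finset.mem_of_mem_erase (Finset.mem_of_mem_erase x.2)⟩)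
            (w ⟨((0 : ℕ), c2), hmem2⟩) := by
        simp only [hudef, if_pos rfl]
      rw [h1]
      congr 1
      · funext x
        exact (huw _ (Finset.mem_erase.mp (Finset.mem_of_mem_erase x.2)).1).symm
      · exact (huw _ hne).symm
    refine ⟨u, ⟨hu1, ?_⟩, ?_⟩
    · intro m hm hm1 hm'
      have hmne : ((m.1 - 1 : ℕ), m.2) ≠ ((c1 : ℕ), (0 : ℕ)) := by
        intro h
        have h1' : m.1 - 1 = c1 := congrArg Prod.fst h
        have h2' : m.1 ≤ c1 := (hub m hm).1
        omega
      rw [huw ⟨(m.1 - 1, m.2), hm'⟩ hmne]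
      have hT' : ((m.1 - 1 : ℕ) + 1, m.2) ∈ T := by
        have : (m.1 - 1 : ℕ) + 1 = m.1 := by omega
        rw [this]
        exact hm
      simp only [hwdef, dif_pos hT']
      have heq : (⟨m, hm⟩ : ↥T) = ⟨(m.1 - 1 + 1, m.2), hT'⟩ :=
        Subtype.ext (Prod.ext (show m.1 = m.1 - 1 + 1 by omega) rfl)
      rw [heq]
    · intro q hq
      have hqne : q ≠ ((c1 : ℕ), (0 : ℕ)) := (Finset.mem_erase.mp hq).1
      have hqR := (hmemR q).mp (Finset.mem_of_mem_erase hq)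
      rw [huw ⟨q, hQT q hq⟩ hqne]
      simp only [hwdef, dif_neg hqR.2, dif_pos hq]
  -- the restriction map is a bijection
  have hbij : Function.Bijective
      (fun (u : ↥E) (q : ↥Q) => u.val ⟨q.val, hQT q.val q.2⟩) := by
    constructor
    · intro u1 u2 h
      apply Subtype.ext
      apply hext u1.val u1.2 u2.val u2.2
      intro q hq
      exact congrFun h ⟨q, hq⟩
    · intro g
      obtain ⟨u, hu, hg⟩ := hsurj g
      exact ⟨⟨u, hu⟩, funext fun q => hg q.val q.2⟩
  have e : ↥E ≃ (↥Q → A) := Equiv.ofBijective _ hbij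
  have : Nat.card ↥E = Fintype.card A ^ c2 := by
    rw [Nat.card_congr e, Nat.card_eq_fintype_card, Fintype.card_fun,
      Fintype.card_coe, hQcard]
  rw [← Nat.card_coe_set_eq]
  exact this
end

section
/- Let T be a tile with coordinatewise maximum (c₁,c₂) and n ∈ ℕ². Then T(n) = {j ∈ ℕ² : there exists m with 0 ≤ m ≤ n and j - m ∈ T}, and the complement of T(m) ∪ (T(n) + m) inside T(m+n) is the disjoint union of the two rectangles BR = {j : c₁ + m₁ < j₁ ≤ c₁ + m₁ + n₁, j₂ < m₂} and UL = {j : j₁ < m₁, c₂ + m₂ < j₂ ≤ c₂ + m₂ + n₂}. -/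
/-- The region `T(n) = ⋃_{0 ≤ k ≤ n} (T + k)` determined by a tile `T` and `n ∈ ℕ²`. -/
def Treg (T : Set (ℕ × ℕ)) (n : ℕ × ℕ) : Set (ℕ × ℕ) :=
  {j | ∃ k : ℕ × ℕ, k ≤ n ∧ ∃ t ∈ T, j = t + k}

lemma treg_mem {T : Set (ℕ × ℕ)} (hher : ∀ n ∈ T, ∀ m : ℕ × ℕ, m ≤ n → m ∈ T)
    (p j : ℕ × ℕ) : j ∈ Treg T p ↔ j - p ∈ T := by
  constructor
  · rintro ⟨k, hk, t, ht, rfl⟩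
    refine hher _ ht _ ?_
    obtain ⟨hk1, hk2⟩ := hk
    exact ⟨by simp; omega, by simp; omega⟩
  · intro h
    refine ⟨j - (j - p), ⟨?_, ?_⟩, j - p, h, ?_⟩
    · simp; omega
    · simp; omega
    · apply Prod.ext <;> simp <;> omega

/-- `T(n) = {j : ∃ m ≤ n, j - m ∈ T}`, and the complement of `T(m) ∪ (T(n) + m)` inside
`T(m+n)` is the disjoint union of the rectangles
`BR = {j : c₁ + m₁ < j₁ ≤ c₁ + m₁ + n₁, j₂ < m₂}` and
`UL = {j : j₁ < m₁, c₂ + m₂ < j₂ ≤ c₂ + m₂ + n₂}`. -/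
theorem stmt_9 (T : Set (ℕ × ℕ)) (c1 c2 : ℕ) (hfin : T.Finite) (hne : T.Nonempty)
    (hher : ∀ n ∈ T, ∀ m : ℕ × ℕ, m ≤ n → m ∈ T)
    (hub : ∀ j ∈ T, j.1 ≤ c1 ∧ j.2 ≤ c2)
    (hmem1 : ((c1 : ℕ), (0 : ℕ)) ∈ T) (hmem2 : ((0 : ℕ), (c2 : ℕ)) ∈ T)
    (m n : ℕ × ℕ) :
    (Treg T n = {j : ℕ × ℕ | ∃ k : ℕ × ℕ, k ≤ n ∧ j - k ∈ T}) ∧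
    (Treg T (m + n) \ (Treg T m ∪ (fun j => j + m) '' Treg T n) =
      {j : ℕ × ℕ | c1 + m.1 < j.1 ∧ j.1 ≤ c1 + m.1 + n.1 ∧ j.2 < m.2} ∪
      {j : ℕ × ℕ | j.1 < m.1 ∧ c2 + m.2 < j.2 ∧ j.2 ≤ c2 + m.2 + n.2}) ∧
    ({j : ℕ × ℕ | c1 + m.1 < j.1 ∧ j.1 ≤ c1 + m.1 + n.1 ∧ j.2 < m.2} ∩
      {j : ℕ × ℕ | j.1 < m.1 ∧ c2 + m.2 < j.2 ∧ j.2 ≤ c2 + m.2 + n.2}) = ∅ := by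
  have hrow : ∀ a : ℕ, a ≤ c1 → ((a : ℕ), (0 : ℕ)) ∈ T := fun a ha =>
    hher _ hmem1 _ ⟨ha, le_refl 0⟩
  have hcol : ∀ b : ℕ, b ≤ c2 → ((0 : ℕ), (b : ℕ)) ∈ T := fun b hb =>
    hher _ hmem2 _ ⟨le_refl 0, hb⟩
  obtain ⟨m1, m2⟩ := m
  obtain ⟨n1, n2⟩ := n
  refine ⟨?_, ?_, ?_⟩
  · ext j
    simp only [Set.mem_setOf_eq, treg_mem hher]
    constructor
    · intro h; exact ⟨(n1, n2), le_refl _, h⟩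
    · rintro ⟨k, hk, h⟩
      refine hher _ h _ ?_
      obtain ⟨hk1, hk2⟩ := hk
      exact ⟨by simp at hk1 ⊢; omega, by simp at hk2 ⊢; omega⟩
  · ext ⟨j1, j2⟩
    simp only [Set.mem_diff, Set.mem_union, Set.mem_image, Set.mem_setOf_eq,
      treg_mem hher, Prod.mk_add_mk, Prod.mk_sub_mk]
    constructor
    · rintro ⟨hA, hB⟩
      push_neg at hB
      obtain ⟨hB1, hB2⟩ := hB
      -- if m ≤ j we get a contradiction
      have hnm : ¬ (m1 ≤ j1 ∧ m2 ≤ j2) := by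
        rintro ⟨h1, h2⟩
        refine hB2 (j1 - m1, j2 - m2) ?_ (by apply Prod.ext <;> simp <;> omega)
        have : ((j1 - m1, j2 - m2) : ℕ × ℕ) - (n1, n2) = (j1 - (m1 + n1), j2 - (m2 + n2)) := by
          apply Prod.ext <;> simp <;> omega
        rw [this]; exact hA
      rcases Nat.lt_or_ge j2 m2 with h2 | h2
      · -- bottom: j2 < m2. Then j - m = (j1 - m1, 0) ∉ T
        left
        have h0 : j2 - m2 = 0 := by omega
        rw [h0] at hB1
        have hgt : c1 < j1 - m1 := by
          by_contra hle
          exact hB1 (hrow _ (by omega))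
        have h0' : j2 - (m2 + n2) = 0 := by omega
        rw [h0'] at hA
        have := (hub _ hA).1
        simp only at this
        exact ⟨by omega, by omega, h2⟩
      · have h1 : j1 < m1 := by omega
        right
        have h0 : j1 - m1 = 0 := by omega
        rw [h0] at hB1
        have hgt : c2 < j2 - m2 := by
          by_contra hle
          exact hB1 (hcol _ (by omega))
        have h0' : j1 - (m1 + n1) = 0 := by omega
        rw [h0'] at hA
        have := (hub _ hA).2
        simp only at this
        exact ⟨h1, by omega, by omega⟩
    · rintro (⟨h1, h2, h3⟩ | ⟨h1, h2, h3⟩)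
      · refine ⟨?_, ?_⟩
        · have : j2 - (m2 + n2) = 0 := by omega
          rw [this]; exact hrow _ (by omega)
        · push_neg
          constructor
          · have : j2 - m2 = 0 := by omega
            rw [this]
            intro hmem
            have := (hub _ hmem).1
            simp only at this; omega
          · rintro ⟨i1, i2⟩ hi heq
            have he1 : i1 + m1 = j1 := congrArg Prod.fst heq
            have he2 : i2 + m2 = j2 := congrArg Prod.snd heq
            simp only [Prod.mk_sub_mk] at hi
            have hi2 : i2 - n2 = 0 := by omega
            rw [hi2] at hi
            have := (hub _ hi).1
            simp only at this; omega
      · refine ⟨?_, ?_⟩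
        · have : j1 - (m1 + n1) = 0 := by omega
          rw [this]; exact hcol _ (by omega)
        · push_neg
          constructor
          · have : j1 - m1 = 0 := by omega
            rw [this]
            intro hmem
            have := (hub _ hmem).2
            simp only at this; omega
          · rintro ⟨i1, i2⟩ hi heq
            have he1 : i1 + m1 = j1 := congrArg Prod.fst heq
            omega
  · ext ⟨j1, j2⟩
    simp only [Set.mem_inter_iff, Set.mem_setOf_eq, Set.mem_empty_iff_false, iff_false]
    rintro ⟨⟨h1, _, _⟩, ⟨h4, _, _⟩⟩
    omega
end

section
/- Let Λ be a row-finite 2-graph with no sources. Then Λ is aperiodic (in the sense that for every vertex v and all distinct m, n ∈ ℕ² with m ∧ n = 0 there is a path λ with range v, d(λ) ≥ m ∨ n, and λ(m, m + d(λ) - (m∨n)) ≠ λ(n, n + d(λ) - (m∨n))) if and only if the same condition holds for all distinct m, n ∈ ℕ² without the assumption m ∧ n = 0. -/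
/-- A 2-graph: a countable category of paths equipped with a degree functor
`d : Λ → ℕ²` satisfying the unique factorisation property. Vertices are identified with
the paths of degree `0`; `seg p m n` is the middle segment `p(m, n)` of a path `p`
(for `m ≤ n ≤ d p`) coming from the factorisation property. -/
structure TwoGraph where
  Path : Type
  countable : Countable Path
  d : Path → ℕ × ℕ
  r : Path → Path
  s : Path → Path
  comp : Path → Path → Path
  seg : Path → ℕ × ℕ → ℕ × ℕ → Path
  d_r : ∀ p, d (r p) = 0
  d_s : ∀ p, d (s p) = 0
  r_vertex : ∀ p, d p = 0 → r p = p
  s_vertex : ∀ p, d p = 0 → s p = p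
  d_comp : ∀ p q, s p = r q → d (comp p q) = d p + d q
  r_comp : ∀ p q, s p = r q → r (comp p q) = r p
  s_comp : ∀ p q, s p = r q → s (comp p q) = s q
  comp_assoc : ∀ p q u, s p = r q → s q = r u → comp (comp p q) u = comp p (comp q u)
  id_comp : ∀ p, comp (r p) p = p
  comp_id : ∀ p, comp p (s p) = p
  d_seg : ∀ p m n, m ≤ n → n ≤ d p → d (seg p m n) = n - m
  seg_zero_d : ∀ p, seg p 0 (d p) = p
  seg_factor : ∀ p m, m ≤ d p →
    s (seg p 0 m) = r (seg p m (d p)) ∧ comp (seg p 0 m) (seg p m (d p)) = p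
  factor_unique : ∀ p q1 q2, s q1 = r q2 → comp q1 q2 = p →
    q1 = seg p 0 (d q1) ∧ q2 = seg p (d q1) (d p)
  seg_seg : ∀ p m n a b, m ≤ n → n ≤ d p → a ≤ b → b ≤ n - m →
    seg (seg p m n) a b = seg p (m + a) (m + b)

/-- Aperiodicity: for every vertex `v` and all distinct `m, n ∈ ℕ²` with `m ∧ n = 0`
there is a path `λ` with range `v`, `d(λ) ≥ m ∨ n`, and
`λ(m, m + d(λ) - (m∨n)) ≠ λ(n, n + d(λ) - (m∨n))`. -/
def TwoGraph.Aperiodic (Λ : TwoGraph) : Prop :=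
  ∀ v, Λ.d v = 0 → ∀ m n : ℕ × ℕ, m ≠ n → m ⊓ n = 0 →
    ∃ p, Λ.r p = v ∧ m ⊔ n ≤ Λ.d p ∧
      Λ.seg p m (m + Λ.d p - (m ⊔ n)) ≠ Λ.seg p n (n + Λ.d p - (m ⊔ n))

/-- The Robertson–Sims condition: the same condition for all distinct `m, n ∈ ℕ²`,
without the assumption `m ∧ n = 0`. -/
def TwoGraph.RobertsonSims (Λ : TwoGraph) : Prop :=
  ∀ v, Λ.d v = 0 → ∀ m n : ℕ × ℕ, m ≠ n →
    ∃ p, Λ.r p = v ∧ m ⊔ n ≤ Λ.d p ∧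
      Λ.seg p m (m + Λ.d p - (m ⊔ n)) ≠ Λ.seg p n (n + Λ.d p - (m ⊔ n))

/-- A row-finite 2-graph with no sources is aperiodic if and only if it satisfies the
Robertson–Sims condition. -/
theorem stmt_10 (Λ : TwoGraph)
    (hrf : ∀ v, Λ.d v = 0 → ∀ n : ℕ × ℕ,
      {p | Λ.r p = v ∧ Λ.d p = n}.Finite ∧ {p | Λ.r p = v ∧ Λ.d p = n}.Nonempty) :
    Λ.Aperiodic ↔ Λ.RobertsonSims := by
  constructor
  · intro hA v hv m n hmn
    set k := m ⊓ n with hk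
    -- pick a path a from v of degree k
    obtain ⟨-, a, hra, hda⟩ := hrf v hv k
    have hsa : Λ.d (Λ.s a) = 0 := Λ.d_s a
    have hmn' : m - k ≠ n - k := by
      intro h
      apply hmn
      have h1 := congrArg Prod.fst h
      have h2 := congrArg Prod.snd h
      simp only [Prod.fst_sub, Prod.snd_sub, hk, Prod.inf_def] at h1 h2
      ext <;> omega
    have hinf : (m - k) ⊓ (n - k) = 0 := by
      have : ((m - k) ⊓ (n - k)).1 = 0 ∧ ((m - k) ⊓ (n - k)).2 = 0 := by
        simp only [Prod.inf_def, Prod.fst_sub, Prod.snd_sub, hk]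
        omega
      ext <;> simp [this.1, this.2]
    obtain ⟨p, hrp, hdp, hne⟩ := hA (Λ.s a) hsa (m - k) (n - k) hmn' hinf
    have hcompat : Λ.s a = Λ.r p := hrp.symm
    set q := Λ.comp a p with hq
    have hdq : Λ.d q = k + Λ.d p := by rw [hq, Λ.d_comp a p hcompat, hda]
    have hrq : Λ.r q = v := by rw [hq, Λ.r_comp a p hcompat, hra]
    -- p is the tail segment of q
    have hfac := Λ.factor_unique q a p hcompat rfl
    have hpseg : p = Λ.seg q k (Λ.d q) := by rw [← hda]; exact hfac.2
    -- componentwise facts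
    have hdp1 : ((m - k) ⊔ (n - k)).1 ≤ (Λ.d p).1 := hdp.1
    have hdp2 : ((m - k) ⊔ (n - k)).2 ≤ (Λ.d p).2 := hdp.2
    simp only [Prod.sup_def, Prod.fst_sub, Prod.snd_sub, hk, Prod.inf_def] at hdp1 hdp2
    have hkle : k ≤ Λ.d q := by
      constructor <;> simp only [hdq, hk, Prod.inf_def, Prod.fst_add, Prod.snd_add] <;> omega
    -- a general lemma: segments of q starting at ≥ k are segments of p
    have hsegq : ∀ x y : ℕ × ℕ, x ≤ y → y ≤ Λ.d p →
        Λ.seg q (k + x) (k + y) = Λ.seg p x y := by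
      intro x y hxy hyd
      rw [hpseg, Λ.seg_seg q k (Λ.d q) x y hkle le_rfl hxy]
      have : Λ.d q - k = Λ.d p := by
        ext <;> simp only [hdq, Prod.fst_sub, Prod.snd_sub, Prod.fst_add, Prod.snd_add] <;> omega
      rw [this]; exact hyd
    refine ⟨q, hrq, ?_, ?_⟩
    · constructor <;>
        simp only [hdq, Prod.sup_def, Prod.fst_add, Prod.snd_add, hk, Prod.inf_def] <;> omega
    · have em : m = k + (m - k) := by
        ext <;> simp only [hk, Prod.inf_def, Prod.fst_add, Prod.snd_add, Prod.fst_sub,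
          Prod.snd_sub] <;> omega
      have en : n = k + (n - k) := by
        ext <;> simp only [hk, Prod.inf_def, Prod.fst_add, Prod.snd_add, Prod.fst_sub,
          Prod.snd_sub] <;> omega
      have em2 : m + Λ.d q - (m ⊔ n) = k + ((m - k) + Λ.d p - ((m - k) ⊔ (n - k))) := by
        ext <;> simp only [hdq, hk, Prod.inf_def, Prod.sup_def, Prod.fst_add, Prod.snd_add,
          Prod.fst_sub, Prod.snd_sub] <;> omega
      have en2 : n + Λ.d q - (m ⊔ n) = k + ((n - k) + Λ.d p - ((m - k) ⊔ (n - k))) := by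
        ext <;> simp only [hdq, hk, Prod.inf_def, Prod.sup_def, Prod.fst_add, Prod.snd_add,
          Prod.fst_sub, Prod.snd_sub] <;> omega
      have hle1 : (m - k) ≤ (m - k) + Λ.d p - ((m - k) ⊔ (n - k)) := by
        constructor <;> simp only [Prod.sup_def, Prod.fst_add, Prod.snd_add, Prod.fst_sub,
          Prod.snd_sub, hk, Prod.inf_def] <;> omega
      have hle1' : (m - k) + Λ.d p - ((m - k) ⊔ (n - k)) ≤ Λ.d p := by
        constructor <;> simp only [Prod.sup_def, Prod.fst_add, Prod.snd_add, Prod.fst_sub,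
          Prod.snd_sub, hk, Prod.inf_def] <;> omega
      have hle2 : (n - k) ≤ (n - k) + Λ.d p - ((m - k) ⊔ (n - k)) := by
        constructor <;> simp only [Prod.sup_def, Prod.fst_add, Prod.snd_add, Prod.fst_sub,
          Prod.snd_sub, hk, Prod.inf_def] <;> omega
      have hle2' : (n - k) + Λ.d p - ((m - k) ⊔ (n - k)) ≤ Λ.d p := by
        constructor <;> simp only [Prod.sup_def, Prod.fst_add, Prod.snd_add, Prod.fst_sub,
          Prod.snd_sub, hk, Prod.inf_def] <;> omega
      calc Λ.seg q m (m + Λ.d q - (m ⊔ n))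
          = Λ.seg p (m - k) ((m - k) + Λ.d p - ((m - k) ⊔ (n - k))) := by
            rw [em2, ← hsegq _ _ hle1 hle1', ← em]
        _ ≠ Λ.seg p (n - k) ((n - k) + Λ.d p - ((m - k) ⊔ (n - k))) := hne
        _ = Λ.seg q n (n + Λ.d q - (m ⊔ n)) := by
            rw [en2, ← hsegq _ _ hle2 hle2', ← en]
  · intro hR v hv m n hmn _
    exact hR v hv m n hmn
end

section
/- Let T be a nondegenerate tile with c₂ = 0 and BD = (T, A, {f_p}) basic data. Then for each a ∈ A there is at most one vertex v ∈ {F_{p,b} : p ∈ A^P, b ∈ A} with v(j·e₁) = a for all 1 ≤ j ≤ c₁; namely, v is determined by v(0) = f_p⁻¹-data, i.e., v(0) must equal the unique b with f_{v|P}(b) = v(c₁e₁) where v|P ≡ a on P. -/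
/-- The tile `T = {0, e₁, …, c₁e₁}` of height `0`. -/
def T19 (c1 : ℕ) : Finset (ℕ × ℕ) := (Finset.range (c1 + 1)).image fun j => (j, 0)

/-- `P = T \ {0, c₁e₁}` for the flat tile (here `c₂e₂ = 0`). -/
def P19 (c1 : ℕ) : Finset (ℕ × ℕ) := ((T19 c1).erase (c1, 0)).erase (0, 0)

/-- The vertex `F_{p,b} : T → A`: `F_{p,b}(0) = F_{p,b}(c₂e₂) = b`,
`F_{p,b}(c₁e₁) = f_p(b)`, `F_{p,b}|_P = p`. -/
def F19 (c1 : ℕ) {A : Type} (f : (↥(P19 c1) → A) → A → A)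
    (p : ↥(P19 c1) → A) (b : A) : ↥(T19 c1) → A :=
  fun t =>
    if h0 : t.val = ((0 : ℕ), (0 : ℕ)) then b
    else if h1 : t.val = (c1, 0) then f p b
    else p ⟨t.val, Finset.mem_erase.mpr ⟨h0, Finset.mem_erase.mpr ⟨h1, t.2⟩⟩⟩

lemma memT19 {c1 : ℕ} {m : ℕ × ℕ} (hm : m ∈ T19 c1) : m.2 = 0 ∧ m.1 ≤ c1 := by
  simp only [T19, Finset.mem_image, Finset.mem_range] at hm
  obtain ⟨j, hj, rfl⟩ := hm
  exact ⟨rfl, Nat.lt_succ_iff.mp hj⟩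

/-- For a nondegenerate tile with `c₂ = 0` and each `a ∈ A`, there is at most one vertex
`v ∈ {F_{p,b}}` with `v(j·e₁) = a` for all `1 ≤ j ≤ c₁`: its value `v(0)` is uniquely
determined. -/
theorem stmt_19 (c1 : ℕ) (hc1 : 1 ≤ c1) (A : Type) [Fintype A] [Nonempty A]
    (f : (↥(P19 c1) → A) → A → A) (hf : ∀ p, Function.Bijective (f p)) (a : A) :
    Set.Subsingleton {v : ↥(T19 c1) → A |
      (∃ p b, v = F19 c1 f p b) ∧
      ∀ (m : ℕ × ℕ) (hm : m ∈ T19 c1), 1 ≤ m.1 → v ⟨m, hm⟩ = a} := by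
  rintro v ⟨⟨p, b, rfl⟩, hva⟩ w ⟨⟨q, c, rfl⟩, hwa⟩
  have hc1mem : (c1, 0) ∈ T19 c1 := by
    simp only [T19, Finset.mem_image, Finset.mem_range]
    exact ⟨c1, Nat.lt_succ_self _, rfl⟩
  have hc1ne : ((c1, 0) : ℕ × ℕ) ≠ (0, 0) := by
    intro h; rw [Prod.mk.injEq] at h; omega
  -- p = q : both equal a on P
  have hpq : p = q := by
    funext x
    have hx := x.2
    simp only [P19, Finset.mem_erase] at hx
    obtain ⟨h0, h1, hT⟩ := hx
    have hpos : 1 ≤ x.val.1 := by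
      obtain ⟨h2, _⟩ := memT19 hT
      rcases Nat.eq_zero_or_pos x.val.1 with h | h
      · exact absurd (Prod.ext h h2) h0
      · exact h
    have hv := hva x.val hT hpos
    have hw := hwa x.val hT hpos
    simp only [F19, h0, h1, dif_neg, not_false_iff] at hv hw
    rw [hv, hw]
  -- f p b = a = f q c, so b = c
  have hvc := hva (c1, 0) hc1mem hc1
  have hwc := hwa (c1, 0) hc1mem hc1
  simp only [F19, hc1ne, dif_neg, not_false_iff, dif_pos] at hvc hwc
  have hbc : b = c := (hf p).1 (by rw [hvc, hpq, hwc])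
  rw [hpq, hbc]
end
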